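/- For complex a and complex x with |x| < 1, ((1 + √(1-x))/2)^{1-2a} equals the Gauss hypergeometric series ₂F₁(a - 1/2, a; 2a; x) = ∑_{n=0}^∞ ((a-1/2)_n (a)_n / ((2a)_n n!)) x^n, where √ denotes the principal branch and 2a is not a nonpositive integer. -/

import Mathlib

open Complex

/-- Pochhammer symbol `(a)_n = a (a+1) ⋯ (a+n-1)`. -/
noncomputable def poch (a : ℂ) (n : ℕ) : ℂ := ∏ k ∈ Finset.range n, (a + k)

/-- `z` is not a nonpositive integer. -/
def NotNonposInt (z : ℂ) : Prop := ∀ n : ℕ, z ≠ -(n : ℂ)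

/-- `(1 + √(1-x))/2`, principal square root. -/
noncomputable def sfun (x : ℂ) : ℂ := (1 + (1 - x) ^ ((1:ℂ)/2)) / 2

/-- `x / (1+√(1-x))²`, principal square root. -/
noncomputable def zfun (x : ℂ) : ℂ := x / (1 + (1 - x) ^ ((1:ℂ)/2)) ^ 2

noncomputable def F21 (a b c x : ℂ) : ℂ :=
  ∑' n : ℕ, poch a n * poch b n / (poch c n * n.factorial) * x ^ n

noncomputable def F32 (a1 a2 a3 b1 b2 x : ℂ) : ℂ :=
  ∑' n : ℕ, poch a1 n * poch a2 n * poch a3 n / (poch b1 n * poch b2 n * n.factorial) * x ^ n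

noncomputable def F43 (a1 a2 a3 a4 b1 b2 b3 x : ℂ) : ℂ :=
  ∑' n : ℕ, poch a1 n * poch a2 n * poch a3 n * poch a4 n /
    (poch b1 n * poch b2 n * poch b3 n * n.factorial) * x ^ n

noncomputable def F54 (a1 a2 a3 a4 a5 b1 b2 b3 b4 x : ℂ) : ℂ :=
  ∑' n : ℕ, poch a1 n * poch a2 n * poch a3 n * poch a4 n * poch a5 n /
    (poch b1 n * poch b2 n * poch b3 n * poch b4 n * n.factorial) * x ^ n

open scoped ENNReal NNReal

namespace SqrtHypAux


lemma re_cpow_half_pos {z : ℂ} (hz : 0 < z.re) : 0 < (z ^ ((1:ℂ)/2)).re := by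
  have hz0 : z ≠ 0 := by
    intro h; rw [h] at hz; simp at hz
  rw [Complex.cpow_def_of_ne_zero hz0, Complex.exp_re]
  apply mul_pos (Real.exp_pos _)
  have harg : |Complex.arg z| < Real.pi / 2 :=
    Complex.abs_arg_lt_pi_div_two_iff.mpr (Or.inl hz)
  have him : (Complex.log z * ((1:ℂ)/2)).im = Complex.arg z / 2 := by
    simp [Complex.mul_im, Complex.log_im]
    ring
  rw [him]
  apply Real.cos_pos_of_mem_Ioo
  have hpi : (0:ℝ) < Real.pi := Real.pi_pos
  obtain ⟨h1, h2⟩ := abs_lt.mp harg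
  constructor <;> [linarith; linarith]

/-- shift of a coefficient sequence -/
def shift (c : ℕ → ℂ) : ℕ → ℂ
  | 0 => 0
  | (n+1) => c n

@[simp] lemma shift_zero (c : ℕ → ℂ) : shift c 0 = 0 := rfl
@[simp] lemma shift_succ (c : ℕ → ℂ) (n : ℕ) : shift c (n+1) = c n := rfl

lemma hasSum_shift {c : ℕ → ℂ} {x s : ℂ} (h : HasSum (fun n => c n * x ^ n) s) :
    HasSum (fun n => shift c n * x ^ n) (x * s) := by
  have h1 : HasSum (fun n => shift c (n+1) * x ^ (n+1)) (x * s) := by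
    have h2 := h.mul_left x
    have h3 : (fun n => x * (c n * x ^ n)) = fun n => shift c (n+1) * x ^ (n+1) := by
      funext n; simp [shift]; ring
    rwa [h3] at h2
  have := (hasSum_nat_add_iff (f := fun n => shift c n * x ^ n) 1).mp h1
  simpa using this

lemma coeff_zero_of_hasSum_zero {c : ℕ → ℂ} {R : ℝ} (hR : 0 < R)
    (h : ∀ x : ℂ, ‖x‖ < R → HasSum (fun n => c n * x ^ n) 0) (n : ℕ) : c n = 0 := by
  have hball : HasFPowerSeriesOnBall (fun _ : ℂ => (0:ℂ))
      (FormalMultilinearSeries.ofScalars ℂ c) 0 (ENNReal.ofReal R) := by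
    refine ⟨?_, by simp [hR], ?_⟩
    · refine ENNReal.le_of_forall_nnreal_lt fun r hr => ?_
      apply FormalMultilinearSeries.le_radius_of_summable
      have hrR : (r:ℝ) < R := by
        rw [← ENNReal.ofReal_coe_nnreal, ENNReal.ofReal_lt_ofReal_iff hR] at hr
        exact hr
      have hsum : Summable (fun n => c n * ((r:ℝ):ℂ) ^ n) :=
        (h ((r:ℝ):ℂ) (by simpa [Complex.norm_of_nonneg r.coe_nonneg] using hrR)).summable
      have hnorm : Summable (fun n => ‖c n * ((r:ℝ):ℂ) ^ n‖) := hsum.norm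
      refine hnorm.congr fun n => ?_
      rw [norm_mul, norm_pow, FormalMultilinearSeries.ofScalars_norm]
      simp [Complex.norm_def, Complex.normSq_ofReal, Real.sqrt_mul_self_eq_abs, _root_.abs_of_nonneg r.coe_nonneg]
    · intro y hy
      have hy' : ‖y‖ < R := by
        rw [EMetric.mem_ball, edist_zero_right, ← ofReal_norm,
          ENNReal.ofReal_lt_ofReal_iff hR] at hy
        simpa using hy
      have hsy := h y hy'
      have hfun : (fun n => c n * y ^ n) =
          fun n => FormalMultilinearSeries.ofScalars ℂ c n fun _ => y := by
        funext m
        rw [FormalMultilinearSeries.ofScalars_apply_eq, smul_eq_mul]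
      rw [hfun] at hsy
      simpa using hsy
  have hz : FormalMultilinearSeries.ofScalars ℂ c = 0 := hball.hasFPowerSeriesAt.eq_zero
  have h0 : FormalMultilinearSeries.ofScalars ℂ c n = 0 := by rw [hz]; rfl
  exact (FormalMultilinearSeries.ofScalars_eq_zero ℂ n).mp h0



lemma deriv_coeff {f : ℂ → ℂ} {p : FormalMultilinearSeries ℂ ℂ ℂ} {R : ℝ≥0∞}
    (hp : HasFPowerSeriesOnBall f p 0 R) :
    ∃ q : FormalMultilinearSeries ℂ ℂ ℂ, HasFPowerSeriesOnBall (deriv f) q 0 R ∧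
      ∀ n, q.coeff n = ((n:ℂ)+1) * p.coeff (n+1) := by
  refine ⟨(ContinuousLinearMap.apply ℂ ℂ (1:ℂ)).compFormalMultilinearSeries p.derivSeries,
    ?_, ?_⟩
  · have h1 := (ContinuousLinearMap.apply ℂ ℂ (1:ℂ)).comp_hasFPowerSeriesOnBall hp.fderiv
    have h2 : (ContinuousLinearMap.apply ℂ ℂ (1:ℂ)) ∘ (fderiv ℂ f) = deriv f := by
      funext z
      rw [Function.comp_apply, ContinuousLinearMap.apply_apply, fderiv_apply_one_eq_deriv]
    rwa [h2] at h1
  · intro n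
    have hd := p.derivSeries_apply_diag n (1:ℂ)
    simp only [FormalMultilinearSeries.coeff,
      ContinuousLinearMap.compFormalMultilinearSeries_apply,
      ContinuousLinearMap.compContinuousMultilinearMap_coe, Function.comp_apply,
      ContinuousLinearMap.apply_apply]
    have h1 : (1 : Fin n → ℂ) = fun _ => (1:ℂ) := rfl
    have h2 : (1 : Fin (n+1) → ℂ) = fun _ => (1:ℂ) := rfl
    rw [h1, hd, h2]
    simp only [smul_eq_mul, nsmul_eq_mul]
    push_cast
    ring



noncomputable def fF (a x : ℂ) : ℂ := sfun x ^ (1 - 2*a)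
noncomputable def sd (x : ℂ) : ℂ := ((1:ℂ)/2 * (1-x) ^ ((1:ℂ)/2 - 1) * (-1)) / 2
noncomputable def sdd (x : ℂ) : ℂ :=
  ((1:ℂ)/2 * (((1:ℂ)/2 - 1) * (1-x) ^ ((1:ℂ)/2 - 1 - 1) * (-1)) * (-1)) / 2
noncomputable def f1 (a x : ℂ) : ℂ := (1-2*a) * sfun x ^ (1-2*a-1) * sd x
noncomputable def f2 (a x : ℂ) : ℂ :=
  ((1-2*a) * ((1-2*a-1) * sfun x ^ (1-2*a-1-1) * sd x)) * sd x
    + ((1-2*a) * sfun x ^ (1-2*a-1)) * sdd x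

section facts
variable {x : ℂ} (hx : ‖x‖ < 1)
include hx

lemma re1x : 0 < (1-x).re := by
  have := Complex.re_le_norm x
  simp only [Complex.sub_re, Complex.one_re]
  linarith

lemma ne1x : (1 - x) ≠ 0 := by
  intro h
  have := re1x hx
  rw [h] at this; simp at this

lemma reu : 0 < ((1-x) ^ ((1:ℂ)/2)).re := re_cpow_half_pos (re1x hx)

lemma neu : (1-x) ^ ((1:ℂ)/2) ≠ 0 := by
  intro h
  have := reu hx
  rw [h] at this; simp at this

lemma reS : 0 < (sfun x).re := by
  have h := reu hx
  have : (sfun x).re = (1 + ((1-x) ^ ((1:ℂ)/2)).re) / 2 := by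
    simp [sfun, Complex.div_re, Complex.add_re, Complex.normSq]
    try ring
  rw [this]; linarith

lemma neS : sfun x ≠ 0 := by
  intro h
  have := reS hx
  rw [h] at this; simp at this

lemma slitS : sfun x ∈ Complex.slitPlane := Or.inl (reS hx)

lemma slit1x : (1 - x) ∈ Complex.slitPlane := Or.inl (re1x hx)

lemma hasDerivAt_cpow1x (c : ℂ) :
    HasDerivAt (fun y : ℂ => (1 - y) ^ c) (c * (1-x) ^ (c-1) * (-1)) x := by
  have h1 : HasDerivAt (fun y : ℂ => 1 - y) (-1) x := by
    simpa using (hasDerivAt_id x).const_sub 1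
  exact h1.cpow_const (slit1x hx)

lemma hasDerivAt_sfun : HasDerivAt sfun (sd x) x := by
  have h := ((hasDerivAt_cpow1x hx ((1:ℂ)/2)).const_add 1).div_const 2
  exact h

lemma hasDerivAt_fF (a : ℂ) : HasDerivAt (fF a) (f1 a x) x := by
  have h := (hasDerivAt_sfun hx).cpow_const (c := 1 - 2*a) (slitS hx)
  exact h

lemma hasDerivAt_sd : HasDerivAt sd (sdd x) x := by
  have h := (((hasDerivAt_cpow1x hx ((1:ℂ)/2 - 1)).const_mul ((1:ℂ)/2)).mul_const
    (-1)).div_const 2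
  exact h

lemma hasDerivAt_f1 (a : ℂ) : HasDerivAt (f1 a) (f2 a x) x := by
  have hF : HasDerivAt (fun y => (1-2*a) * sfun y ^ (1-2*a-1))
      ((1-2*a) * ((1-2*a-1) * sfun x ^ (1-2*a-1-1) * sd x)) x :=
    ((hasDerivAt_sfun hx).cpow_const (c := 1-2*a-1) (slitS hx)).const_mul (1-2*a)
  have h := hF.mul (hasDerivAt_sd hx)
  exact h

lemma ode (a : ℂ) :
    x*(1-x) * f2 a x + (2*a - (2*a + 1/2)*x) * f1 a x - (a - 1/2)*a * fF a x = 0 := by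
  have h1ne := ne1x hx
  have hune := neu hx
  have hSne := neS hx
  set u := (1-x) ^ ((1:ℂ)/2) with hu
  have huu : u * u = 1 - x := by
    rw [hu, ← Complex.cpow_add _ _ h1ne]
    norm_num
  have h1u : (1:ℂ) + u ≠ 0 := by
    intro h
    have := reu hx
    have h2 : ((1:ℂ) + u).re = 0 := by rw [h]; rfl
    simp only [Complex.add_re, Complex.one_re] at h2
    rw [← hu] at this
    linarith
  have hS : sfun x = (1+u)/2 := rfl
  have einv : (1-x)⁻¹ = u⁻¹ * u⁻¹ := by rw [← huu, mul_inv]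
  have eS : (sfun x)⁻¹ = 2 * (1+u)⁻¹ := by
    rw [hS, inv_div, div_eq_mul_inv]
  have e1 : sfun x ^ (1-2*a-1) = sfun x ^ (1-2*a) * (2 * (1+u)⁻¹) := by
    rw [show (1-2*a-1) = (1-2*a) + (-1) by ring, Complex.cpow_add _ _ hSne,
      Complex.cpow_neg_one, eS]
  have e2 : sfun x ^ (1-2*a-1-1) = sfun x ^ (1-2*a) * (2 * (1+u)⁻¹) * (2 * (1+u)⁻¹) := by
    rw [show (1-2*a-1-1) = (1-2*a) + (-1) + (-1) by ring, Complex.cpow_add _ _ hSne,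
      Complex.cpow_add _ _ hSne, Complex.cpow_neg_one, eS]
  have e3 : (1-x) ^ ((1:ℂ)/2 - 1) = u * (u⁻¹ * u⁻¹) := by
    rw [show ((1:ℂ)/2 - 1) = (1:ℂ)/2 + (-1) by ring, Complex.cpow_add _ _ h1ne,
      Complex.cpow_neg_one, ← hu, einv]
  have e4 : (1-x) ^ ((1:ℂ)/2 - 1 - 1) = u * (u⁻¹ * u⁻¹) * (u⁻¹ * u⁻¹) := by
    rw [show ((1:ℂ)/2 - 1 - 1) = (1:ℂ)/2 + (-1) + (-1) by ring, Complex.cpow_add _ _ h1ne,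
      Complex.cpow_add _ _ h1ne, Complex.cpow_neg_one, ← hu, einv]
  set P := sfun x ^ (1-2*a) with hP
  have hxu : x = 1 - u*u := by rw [huu]; ring
  have hv : u * u⁻¹ = 1 := mul_inv_cancel₀ hune
  have hw : (1+u) * (1+u)⁻¹ = 1 := mul_inv_cancel₀ h1u
  simp only [fF, f1, f2, sd, sdd]
  rw [e1, e2, e3, e4, ← hP]
  rw [hxu]
  linear_combination (((-1:ℂ)/2)*a*P + ((1:ℂ)/1)*a*a*P + ((1:ℂ)/1)*u⁻¹*u⁻¹*a*P + ((-2:ℂ)/1)*u⁻¹*u⁻¹*a*a*P + ((-1:ℂ)/1)*u⁻¹*u⁻¹*(1+u)⁻¹*a*P + ((2:ℂ)/1)*u⁻¹*u⁻¹*(1+u)⁻¹*a*a*P + ((-1:ℂ)/1)*u⁻¹*u⁻¹*u⁻¹*a*P + ((2:ℂ)/1)*u⁻¹*u⁻¹*u⁻¹*a*a*P + ((1:ℂ)/1)*u⁻¹*u⁻¹*u⁻¹*(1+u)⁻¹*a*P + ((-2:ℂ)/1)*u⁻¹*u⁻¹*u⁻¹*(1+u)⁻¹*a*a*P + ((-1:ℂ)/2)*u*u⁻¹*a*P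 + ((1:ℂ)/1)*u*u⁻¹*a*a*P + ((-1:ℂ)/4)*u*u⁻¹*u⁻¹*P + ((-1:ℂ)/2)*u*u⁻¹*u⁻¹*a*P + ((2:ℂ)/1)*u*u⁻¹*u⁻¹*a*a*P + ((1:ℂ)/1)*u*u⁻¹*u⁻¹*u⁻¹*a*P + ((-2:ℂ)/1)*u*u⁻¹*u⁻¹*u⁻¹*a*a*P + ((1:ℂ)/4)*u*u*u⁻¹*u⁻¹*P + ((-1:ℂ)/1)*u*u*u⁻¹*u⁻¹*a*a*P + ((-1:ℂ)/4)*u*u*u⁻¹*u⁻¹*u⁻¹*P + ((-1:ℂ)/2)*u*u*u⁻¹*u⁻¹*u⁻¹*a*P + ((2:ℂ)/1)*u*u*u⁻¹*u⁻¹*u⁻¹*a*a*P + ((1:ℂ)/4)*u*u*u*u⁻¹*u⁻¹*u⁻¹*P + ((-1:ℂ)/1)*u*u*u*u⁻¹*u⁻¹*u⁻¹*a*a*P) * hv +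
    (((-1:ℂ)/1)*u⁻¹*u⁻¹*a*P + ((2:ℂ)/1)*u⁻¹*u⁻¹*a*a*P + ((1:ℂ)/1)*u⁻¹*u⁻¹*u⁻¹*a*P + ((-2:ℂ)/1)*u⁻¹*u⁻¹*u⁻¹*a*a*P + ((1:ℂ)/4)*u*u⁻¹*u⁻¹*P + ((1:ℂ)/2)*u*u⁻¹*u⁻¹*a*P + ((-2:ℂ)/1)*u*u⁻¹*u⁻¹*a*a*P + ((-1:ℂ)/1)*u*u⁻¹*u⁻¹*u⁻¹*u⁻¹*a*P + ((2:ℂ)/1)*u*u⁻¹*u⁻¹*u⁻¹*u⁻¹*a*a*P + ((-1:ℂ)/4)*u*u*u⁻¹*u⁻¹*P + ((-1:ℂ)/2)*u*u*u⁻¹*u⁻¹*a*P + ((2:ℂ)/1)*u*u*u⁻¹*u⁻¹*a*a*P + ((1:ℂ)/1)*u*u*u⁻¹*u⁻¹*u⁻¹*u⁻¹*a*P + ((-2:ℂ)/1)*u*u*u⁻¹*u⁻¹*u⁻¹*u⁻¹*a*a*P + ((-1:ℂ)/4)*u*u*u*u⁻¹*u⁻¹*u⁻¹*u⁻¹*P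 + ((-1:ℂ)/2)*u*u*u*u⁻¹*u⁻¹*u⁻¹*u⁻¹*a*P + ((2:ℂ)/1)*u*u*u*u⁻¹*u⁻¹*u⁻¹*u⁻¹*a*a*P + ((1:ℂ)/4)*u*u*u*u*u⁻¹*u⁻¹*u⁻¹*u⁻¹*P + ((-1:ℂ)/1)*u*u*u*u*u⁻¹*u⁻¹*u⁻¹*u⁻¹*a*a*P + ((-1:ℂ)/2)*u*u*u*u*u⁻¹*u⁻¹*u⁻¹*u⁻¹*(1+u)⁻¹*a*P + ((1:ℂ)/1)*u*u*u*u*u⁻¹*u⁻¹*u⁻¹*u⁻¹*(1+u)⁻¹*a*a*P + ((1:ℂ)/2)*u*u*u*u*u*u⁻¹*u⁻¹*u⁻¹*u⁻¹*(1+u)⁻¹*a*P + ((-1:ℂ)/1)*u*u*u*u*u*u⁻¹*u⁻¹*u⁻¹*u⁻¹*(1+u)⁻¹*a*a*P) * hw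

end facts


lemma hasSum_of_ball {f : ℂ → ℂ} {p : FormalMultilinearSeries ℂ ℂ ℂ} {R : ℝ≥0∞}
    (hp : HasFPowerSeriesOnBall f p 0 R) {x : ℂ} (hx : x ∈ Metric.eball (0:ℂ) R) :
    HasSum (fun n => p.coeff n * x ^ n) (f x) := by
  have h := hp.hasSum hx
  rw [zero_add] at h
  have hfn : (fun n => p n fun _ => x) = fun n => p.coeff n * x ^ n := by
    funext n
    rw [FormalMultilinearSeries.apply_eq_pow_smul_coeff, smul_eq_mul]
    ring
  rwa [hfn] at h

lemma coeff_rec (a : ℂ) {p : FormalMultilinearSeries ℂ ℂ ℂ} {R : ℝ≥0∞}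
    (hp : HasFPowerSeriesOnBall (fF a) p 0 R) (hR0 : 0 < R) (hR1 : R ≤ 1) (n : ℕ) :
    ((n:ℂ)+1) * ((n:ℂ) + 2*a) * p.coeff (n+1)
      = ((n:ℂ) + a - 1/2) * ((n:ℂ) + a) * p.coeff n := by
  have hRfin : R ≠ ⊤ := fun h => by rw [h] at hR1; exact (not_le.mpr (by simp)) hR1
  have hmem1 : ∀ y : ℂ, y ∈ Metric.eball (0:ℂ) R → ‖y‖ < 1 := by
    intro y hy
    rw [EMetric.mem_ball, edist_zero_right, ← ofReal_norm] at hy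
    have h2 := lt_of_lt_of_le hy hR1
    rw [show (1:ℝ≥0∞) = ENNReal.ofReal 1 by simp,
      ENNReal.ofReal_lt_ofReal_iff one_pos] at h2
    exact h2
  obtain ⟨q, hq0, hqc⟩ := deriv_coeff hp
  have hq : HasFPowerSeriesOnBall (f1 a) q 0 R := by
    apply hq0.congr
    intro y hy
    exact (hasDerivAt_fF (hmem1 y hy) a).deriv
  obtain ⟨w, hw0, hwc⟩ := deriv_coeff hq
  have hw : HasFPowerSeriesOnBall (f2 a) w 0 R := by
    apply hw0.congr
    intro y hy
    exact (hasDerivAt_f1 (hmem1 y hy) a).deriv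
  have hρ0 : 0 < R.toReal := ENNReal.toReal_pos hR0.ne' hRfin
  have hmem : ∀ y : ℂ, ‖y‖ < R.toReal → y ∈ Metric.eball (0:ℂ) R := by
    intro y hy
    rw [EMetric.mem_ball, edist_zero_right, ← ofReal_norm,
      ← ENNReal.ofReal_toReal hRfin]
    exact (ENNReal.ofReal_lt_ofReal_iff hρ0).mpr hy
  have hEzero : ∀ m : ℕ, (fun m : ℕ => ((m:ℂ)+1) * ((m:ℂ) + 2*a) * p.coeff (m+1)
      - ((m:ℂ) + a - 1/2) * ((m:ℂ) + a) * p.coeff m) m = 0 := by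
    apply coeff_zero_of_hasSum_zero hρ0
    intro x hx
    have hx1 : ‖x‖ < 1 := hmem1 x (hmem x hx)
    have h0 := hasSum_of_ball hp (hmem x hx)
    have h1 := hasSum_of_ball hq (hmem x hx)
    have h2 := hasSum_of_ball hw (hmem x hx)
    have T1 := hasSum_shift h2
    have T2 := hasSum_shift T1
    have T3 := h1.mul_left (2*a)
    have T4 := (hasSum_shift h1).mul_left (2*a + 1/2)
    have T5 := h0.mul_left ((a - 1/2)*a)
    have total := (((T1.sub T2).add T3).sub T4).sub T5
    have hval : x * f2 a x - x * (x * f2 a x) + 2*a * f1 a x - (2*a + 1/2) * (x * f1 a x)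
        - (a - 1/2)*a * fF a x = 0 := by
      have hode := ode hx1 a
      linear_combination hode
    rw [hval] at total
    have hfun : (fun m => shift (fun n => w.coeff n) m * x ^ m
          - shift (shift (fun n => w.coeff n)) m * x ^ m
          + 2*a * (q.coeff m * x ^ m)
          - (2*a + 1/2) * (shift (fun n => q.coeff n) m * x ^ m)
          - (a - 1/2)*a * (p.coeff m * x ^ m))
        = fun m : ℕ => (((m:ℂ)+1) * ((m:ℂ) + 2*a) * p.coeff (m+1)
          - ((m:ℂ) + a - 1/2) * ((m:ℂ) + a) * p.coeff m) * x ^ m := by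
      funext m
      match m with
      | 0 =>
        simp only [shift_zero, shift_succ]
        rw [hqc 0]
        push_cast
        ring
      | 1 =>
        simp only [shift_zero, shift_succ]
        rw [hwc 0, hqc 0, hqc 1]
        push_cast
        ring
      | (k+2) =>
        simp only [shift_zero, shift_succ]
        rw [hwc (k+1), hwc k, hqc (k+2), hqc (k+1)]
        push_cast
        ring
    rw [hfun] at total
    exact total
  have h := hEzero n
  simp only at h
  linear_combination h

noncomputable def cc (a : ℂ) (n : ℕ) : ℂ :=
  poch (a - 1/2) n * poch a n / (poch (2 * a) n * n.factorial)

lemma poch_zero' (z : ℂ) : poch z 0 = 1 := Finset.prod_range_zero _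

lemma poch_succ (z : ℂ) (n : ℕ) : poch z (n+1) = poch z n * (z + n) :=
  Finset.prod_range_succ _ _

lemma poch_ne_zero {a : ℂ} (h2a : NotNonposInt (2*a)) (n : ℕ) : poch (2*a) n ≠ 0 := by
  unfold poch
  rw [Finset.prod_ne_zero_iff]
  intro k _
  intro h
  exact h2a k (by linear_combination h)

lemma cc_zero (a : ℂ) : cc a 0 = 1 := by
  simp [cc, poch_zero']

lemma cc_rec (a : ℂ) (h2a : NotNonposInt (2*a)) (n : ℕ) :
    ((n:ℂ)+1) * ((n:ℂ) + 2*a) * cc a (n+1) = ((n:ℂ) + a - 1/2) * ((n:ℂ) + a) * cc a n := by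
  have hfac : (((n+1).factorial : ℕ) : ℂ) = ((n:ℂ)+1) * (n.factorial : ℂ) := by
    rw [Nat.factorial_succ]
    push_cast
    ring
  have hpc := poch_ne_zero h2a n
  have hc2 : (2*a + (n:ℂ)) ≠ 0 := by
    intro h
    exact h2a n (by linear_combination h)
  have hfn : ((n.factorial : ℕ) : ℂ) ≠ 0 := by
    exact_mod_cast Nat.factorial_ne_zero n
  have hn1 : ((n:ℂ)+1) ≠ 0 := by
    intro h
    have : ((n:ℂ)+1) ≠ 0 := by
      exact_mod_cast Nat.succ_ne_zero n
    exact this h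
  unfold cc
  rw [poch_succ, poch_succ, poch_succ, hfac]
  rw [← mul_div_assoc, ← mul_div_assoc,
    div_eq_div_iff (mul_ne_zero (mul_ne_zero hpc hc2) (mul_ne_zero hn1 hfn))
      (mul_ne_zero hpc hfn)]
  ring

lemma coeff_eq_cc (a : ℂ) (h2a : NotNonposInt (2*a)) {p : FormalMultilinearSeries ℂ ℂ ℂ}
    {R : ℝ≥0∞} (hp : HasFPowerSeriesOnBall (fF a) p 0 R) (hR0 : 0 < R) (hR1 : R ≤ 1) :
    ∀ n, p.coeff n = cc a n := by
  intro n
  induction n with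
  | zero =>
    have h0 : p.coeff 0 = fF a 0 := hp.coeff_zero 1
    rw [h0, cc_zero]
    have hs : sfun 0 = 1 := by
      rw [sfun]
      norm_num
    rw [fF, hs, one_cpow]
  | succ n ih =>
    have hc2 : ((n:ℂ)+1) * ((n:ℂ) + 2*a) ≠ 0 := by
      apply mul_ne_zero
      · intro h
        have : ((n:ℂ)+1) ≠ 0 := by exact_mod_cast Nat.succ_ne_zero n
        exact this h
      · intro h
        exact h2a n (by linear_combination h)
    apply mul_left_cancel₀ hc2
    calc ((n:ℂ)+1) * ((n:ℂ) + 2*a) * p.coeff (n+1)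
        = ((n:ℂ) + a - 1/2) * ((n:ℂ) + a) * p.coeff n := coeff_rec a hp hR0 hR1 n
      _ = ((n:ℂ) + a - 1/2) * ((n:ℂ) + a) * cc a n := by rw [ih]
      _ = ((n:ℂ)+1) * ((n:ℂ) + 2*a) * cc a (n+1) := (cc_rec a h2a n).symm

end SqrtHypAux

open SqrtHypAux in
theorem sqrt_power_eq_hyp (a x : ℂ) (hx : ‖x‖ < 1) (h2a : NotNonposInt (2 * a)) :
    sfun x ^ (1 - 2 * a) =
      ∑' n : ℕ, poch (a - 1/2) n * poch a n / (poch (2 * a) n * n.factorial) * x ^ n := by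
  have habs0 : (0:ℝ) ≤ ‖x‖ := norm_nonneg x
  set ρ : ℝ≥0 := ⟨(1 + ‖x‖)/2, by positivity⟩ with hρ
  have hρcoe : (ρ:ℝ) = (1 + ‖x‖)/2 := rfl
  have hρ1 : (ρ:ℝ) < 1 := by rw [hρcoe]; linarith
  have hxρ : ‖x‖ < (ρ:ℝ) := by rw [hρcoe]; linarith
  have hρ0 : 0 < ρ := by
    have : (0:ℝ) < (ρ:ℝ) := lt_of_le_of_lt habs0 hxρ
    exact_mod_cast this
  have hdiff : DifferentiableOn ℂ (fF a) (Metric.closedBall 0 (ρ:ℝ)) := by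
    intro y hy
    have hy1 : ‖y‖ < 1 := by
      rw [Metric.mem_closedBall, dist_zero_right] at hy
      exact lt_of_le_of_lt hy hρ1
    exact ((hasDerivAt_fF hy1 a).differentiableAt).differentiableWithinAt
  have hball := hdiff.hasFPowerSeriesOnBall hρ0
  have hcoeff := coeff_eq_cc a h2a hball (by exact_mod_cast hρ0)
    (by exact_mod_cast hρ1.le)
  have hxmem : x ∈ Metric.eball (0:ℂ) (ρ:ℝ≥0∞) := by
    rw [EMetric.mem_ball, edist_zero_right]
    exact_mod_cast (show ‖x‖₊ < ρ by
      rw [← NNReal.coe_lt_coe, coe_nnnorm]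
      exact hxρ)
  have hs := hasSum_of_ball hball hxmem
  have hfn : (fun n => (cauchyPowerSeries (fF a) 0 ρ).coeff n * x ^ n)
      = fun n => poch (a - 1/2) n * poch a n / (poch (2 * a) n * n.factorial) * x ^ n := by
    funext n
    rw [hcoeff n]
    rfl
  rw [hfn] at hs
  exact (hs.tsum_eq).symm
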